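/- arXiv:1901.05154 — 3 statements merged into one kernel-verified Lean document; each statement's English description precedes it below -/
import Mathlib

section
/- Fix w ≤ 0, u ∈ ℝ^N, u₀ ∈ ℝ, and any point a^m ∈ ℝ^N. Define φ = w·u·𝟙(u⊤a^m + u₀ > 0) and φ₀ = w·u₀·𝟙(u⊤a^m + u₀ > 0), where 𝟙 is the indicator of positivity. Then for all a ∈ ℝ^N, w·max{u⊤a + u₀, 0} ≤ φ⊤a + φ₀. -/
open Finset

/-- Validity of the gradient-based cut for neurons with nonpositive weight:
with `φ = w·u·𝟙(u⊤aᵐ + u₀ > 0)` and `φ₀ = w·u₀·𝟙(u⊤aᵐ + u₀ > 0)`,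
we have `w·max(u⊤a + u₀, 0) ≤ φ⊤a + φ₀` for all `a`. -/
theorem neg_weight_gradient_cut_valid (N : ℕ) (w : ℝ) (hw : w ≤ 0)
    (u : Fin N → ℝ) (u₀ : ℝ) (am : Fin N → ℝ) :
    ∀ a : Fin N → ℝ,
      w * max (∑ i, u i * a i + u₀) 0 ≤
        (∑ i, (w * u i * (if 0 < ∑ j, u j * am j + u₀ then (1 : ℝ) else 0)) * a i) +
          w * u₀ * (if 0 < ∑ j, u j * am j + u₀ then (1 : ℝ) else 0) := by
  intro a
  by_cases h : 0 < ∑ j, u j * am j + u₀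
  · simp only [h, if_pos, mul_one]
    have : (∑ i, w * u i * a i) + w * u₀ = w * (∑ i, u i * a i + u₀) := by
      rw [mul_add, Finset.mul_sum]; simp [mul_assoc]
    rw [this]
    exact mul_le_mul_of_nonpos_left (le_max_left _ _) hw
  · simp only [h, if_neg, mul_zero, zero_mul, Finset.sum_const_zero, add_zero, if_false]
    exact mul_nonpos_of_nonpos_of_nonneg hw (le_max_right _ _)
end

section
/- Under the setting of the previous statement (w > 0, M⁻ ≤ 0 ≤ M⁺, ϑ = M⁺/(Σ_n |Γ_n| ā_n) ∈ [0,1]), define θ_n = w Γ_n ϑ for all n and θ₀ = −w ϑ Σ_{n∈N⁻} Γ_n ā_n. Then for every a in the box [0, ā]: (i) Σ_n θ_n a_n + θ₀ ≥ w(Γ⊤a + Γ₂), (ii) Σ_n θ_n a_n + θ₀ ≥ 0, hence Σ_n θ_n a_n + θ₀ ≥ w·max{Γ⊤a + Γ₂, 0}. -/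
open Finset

/-- Validity of the cut for positive-weight neurons in the interior case:
with `ϑ = M⁺ / Σ |Γ n| ā n`, `θ n = w Γ n ϑ` and `θ₀ = −w ϑ Σ_{Γ n < 0} Γ n ā n`,
for every `a` in the box `[0, ā]` we have
`Σ θ n a n + θ₀ ≥ w (Γ⊤a + Γ₂)`, `Σ θ n a n + θ₀ ≥ 0`, hence
`Σ θ n a n + θ₀ ≥ w · max (Γ⊤a + Γ₂) 0`. -/
theorem pos_weight_cut_valid (N : ℕ) (w : ℝ) (hw : 0 < w)
    (Γ : Fin N → ℝ) (hΓ : Γ ≠ 0) (Γ₂ : ℝ) (abar : Fin N → ℝ)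
    (habar : ∀ n, 0 < abar n)
    (hMm : (∑ n ∈ univ.filter fun n => Γ n < 0, Γ n * abar n) + Γ₂ ≤ 0)
    (hMp : 0 ≤ (∑ n ∈ univ.filter fun n => 0 ≤ Γ n, Γ n * abar n) + Γ₂)
    (ϑ : ℝ)
    (hϑ : ϑ = ((∑ n ∈ univ.filter fun n => 0 ≤ Γ n, Γ n * abar n) + Γ₂) /
            (∑ n, |Γ n| * abar n))
    (θ : Fin N → ℝ) (hθ : ∀ n, θ n = w * Γ n * ϑ)
    (θ₀ : ℝ) (hθ₀ : θ₀ = -w * ϑ * ∑ n ∈ univ.filter fun n => Γ n < 0, Γ n * abar n) :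
    ∀ a : Fin N → ℝ, (∀ n, 0 ≤ a n ∧ a n ≤ abar n) →
      w * (∑ n, Γ n * a n + Γ₂) ≤ (∑ n, θ n * a n) + θ₀ ∧
      0 ≤ (∑ n, θ n * a n) + θ₀ ∧
      w * max (∑ n, Γ n * a n + Γ₂) 0 ≤ (∑ n, θ n * a n) + θ₀ := by
  intro a ha
  have hPQ : ∀ f : Fin N → ℝ, ∑ n, f n =
      (∑ n ∈ univ.filter fun n => 0 ≤ Γ n, f n) +
      (∑ n ∈ univ.filter fun n => Γ n < 0, f n) := by
    intro f
    rw [← sum_filter_add_sum_filter_not univ (fun n => 0 ≤ Γ n) f]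
    congr 1
    apply sum_congr _ fun _ _ => rfl
    ext n; simp [not_le]
  set Spos := ∑ n ∈ univ.filter fun n => 0 ≤ Γ n, Γ n * abar n with hSpos
  set Sneg := ∑ n ∈ univ.filter fun n => Γ n < 0, Γ n * abar n with hSneg
  have hS : 0 < ∑ n, |Γ n| * abar n := by
    obtain ⟨m, hm⟩ := Function.ne_iff.mp hΓ
    apply Finset.sum_pos' (fun n _ => mul_nonneg (abs_nonneg _) (habar n).le)
    exact ⟨m, mem_univ m, mul_pos (abs_pos.mpr hm) (habar m)⟩
  have hSsplit : (∑ n, |Γ n| * abar n) = Spos - Sneg := by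
    rw [hPQ (fun n => |Γ n| * abar n)]
    have h1 : (∑ n ∈ univ.filter fun n => 0 ≤ Γ n, |Γ n| * abar n) = Spos :=
      sum_congr rfl fun n hn => by rw [abs_of_nonneg (mem_filter.mp hn).2]
    have h2 : (∑ n ∈ univ.filter fun n => Γ n < 0, |Γ n| * abar n) = -Sneg := by
      rw [hSneg, ← Finset.sum_neg_distrib]
      exact sum_congr rfl fun n hn => by rw [abs_of_neg (mem_filter.mp hn).2]; ring
    rw [h1, h2]; ring
  have hϑ0 : 0 ≤ ϑ := by rw [hϑ]; exact div_nonneg hMp hS.le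
  have hϑ1 : ϑ ≤ 1 := by
    rw [hϑ, div_le_one hS, hSsplit]
    linarith
  have hSS : Spos - Sneg ≠ 0 := by rw [← hSsplit]; exact hS.ne'
  have hϑS : ϑ * (Spos - Sneg) = Spos + Γ₂ := by
    rw [hϑ, hSsplit]; field_simp
  have hsum : (∑ n, θ n * a n) + θ₀ = w * ϑ * ((∑ n, Γ n * a n) - Sneg) := by
    have h1 : ∑ n, θ n * a n = w * ϑ * ∑ n, Γ n * a n := by
      rw [Finset.mul_sum]
      exact sum_congr rfl fun n _ => by rw [hθ]; ring
    rw [h1, hθ₀]; ring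
  have hT : Sneg ≤ ∑ n, Γ n * a n := by
    rw [hPQ (fun n => Γ n * a n)]
    have l1 : 0 ≤ ∑ n ∈ univ.filter fun n => 0 ≤ Γ n, Γ n * a n :=
      sum_nonneg fun n hn => mul_nonneg (mem_filter.mp hn).2 (ha n).1
    have l2 : Sneg ≤ ∑ n ∈ univ.filter fun n => Γ n < 0, Γ n * a n :=
      sum_le_sum fun n hn =>
        mul_le_mul_of_nonpos_left (ha n).2 (mem_filter.mp hn).2.le
    linarith
  have hii : 0 ≤ (∑ n, θ n * a n) + θ₀ := by
    rw [hsum]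
    have : 0 ≤ (∑ n, Γ n * a n) - Sneg := by linarith
    positivity
  have hkey : (ϑ - 1) * Spos ≤ (ϑ - 1) * ∑ n, Γ n * a n := by
    rw [hSpos, Finset.mul_sum, Finset.mul_sum, hPQ (fun n => (ϑ - 1) * (Γ n * a n))]
    have l1 : (∑ n ∈ univ.filter fun n => 0 ≤ Γ n, (ϑ - 1) * (Γ n * abar n)) ≤
        ∑ n ∈ univ.filter fun n => 0 ≤ Γ n, (ϑ - 1) * (Γ n * a n) :=
      sum_le_sum fun n hn => by
        have h1 : 0 ≤ Γ n := (mem_filter.mp hn).2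
        have h2 := (ha n).2
        exact mul_le_mul_of_nonpos_left (mul_le_mul_of_nonneg_left h2 h1)
          (by linarith)
    have l2 : 0 ≤ ∑ n ∈ univ.filter fun n => Γ n < 0, (ϑ - 1) * (Γ n * a n) :=
      sum_nonneg fun n hn => by
        have h1 : Γ n < 0 := (mem_filter.mp hn).2
        have h2 := (ha n).1
        have h3 : Γ n * a n ≤ 0 := mul_nonpos_of_nonpos_of_nonneg h1.le h2
        nlinarith
    linarith
  have hi : w * (∑ n, Γ n * a n + Γ₂) ≤ (∑ n, θ n * a n) + θ₀ := by
    rw [hsum]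
    have h1 : (∑ n, Γ n * a n) + Γ₂ ≤ ϑ * ((∑ n, Γ n * a n) - Sneg) := by
      nlinarith [hkey, hϑS]
    nlinarith
  refine ⟨hi, hii, ?_⟩
  rcases max_choice (∑ n, Γ n * a n + Γ₂) 0 with h | h <;> rw [h]
  · exact hi
  · rw [mul_zero]; exact hii
end

section
/- The integer optimality cut is valid: if η̄ ≥ v(a) for all a ∈ A, and ζ^k : A → ℤ satisfies ζ^k(a^k) = 0 and ζ^k(a) ≥ 1 for a ≠ a^k, then for all a ∈ A, v(a) ≤ v(a^k) + ζ^k(a)(η̄ − v(a^k)). -/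
/-- Validity of the Laporte–Louveaux integer optimality cut: if `η̄` is an upper
bound for `v` on `A` and `ζ` vanishes exactly at `aᵏ` and is at least `1`
elsewhere, then `v a ≤ v aᵏ + ζ a (η̄ − v aᵏ)` for all `a`. -/
theorem integer_optimality_cut_valid
    (A : Type*) [Fintype A] [Nonempty A]
    (v : A → ℝ) (ηbar : ℝ) (ak : A) (ζ : A → ℤ)
    (hηbar : ∀ a, v a ≤ ηbar)
    (hζ0 : ζ ak = 0)
    (hζ1 : ∀ a, a ≠ ak → 1 ≤ ζ a) :
    ∀ a, v a ≤ v ak + (ζ a : ℝ) * (ηbar - v ak) := by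
  intro a
  by_cases h : a = ak
  · subst h; simp [hζ0]
  · have h1 : (1 : ℝ) ≤ (ζ a : ℝ) := by exact_mod_cast hζ1 a h
    have hnn : 0 ≤ ηbar - v ak := by linarith [hηbar ak]
    nlinarith [hηbar a]
end
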